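/- Let C be a nonempty finite set with values λ : C → ℝ≥0 not identically zero and weights w : C → ℤ>0, let ε > 0, and set ρ(c) = λ(c)/w(c), R = max_{c∈C} ρ(c), r_j = R·e^{−εj}, and C^{(j)} = {c ∈ C : ρ(c) ≥ r_j}. Then for every function f : C → ℝ≥0 and every natural number k, ∑_{j=0}^{k} f(C^{(j)})·(r_j − r_{j+1}) ≤ ∑_{c ∈ C^{(k)}} f(c)·ρ(c). -/
import Mathlib


/-- Riemann-like lower bound:
`∑_{j=0}^{k} f(C^{(j)})·(r_j − r_{j+1}) ≤ ∑_{c ∈ C^{(k)}} f(c)·ρ(c)`. -/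
theorem stmt_1 {C : Type*} [Fintype C] [Nonempty C]
    (lam : C → ℝ) (hlam : ∀ c, 0 ≤ lam c) (hlamne : ∃ c, lam c ≠ 0)
    (w : C → ℤ) (hw : ∀ c, 0 < w c)
    (ε : ℝ) (hε : 0 < ε)
    (ρ : C → ℝ) (hρ : ∀ c, ρ c = lam c / (w c : ℝ))
    (R : ℝ) (hR : R = Finset.univ.sup' Finset.univ_nonempty ρ)
    (r : ℕ → ℝ) (hr : ∀ j : ℕ, r j = R * Real.exp (-(ε * j)))
    (f : C → ℝ) (hf : ∀ c, 0 ≤ f c) (k : ℕ) :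
    ∑ j ∈ Finset.range (k + 1),
        (∑ c ∈ Finset.univ.filter (fun c => r j ≤ ρ c), f c) * (r j - r (j + 1))
      ≤ ∑ c ∈ Finset.univ.filter (fun c => r k ≤ ρ c), f c * ρ c := by
  have hRnn : 0 ≤ R := by
    obtain ⟨c⟩ := ‹Nonempty C›
    have h1 : (0:ℝ) ≤ ρ c := by
      rw [hρ]
      exact div_nonneg (hlam c) (by exact_mod_cast (hw c).le)
    exact h1.trans (hR ▸ Finset.le_sup' ρ (Finset.mem_univ c))
  have hrnn : ∀ j, 0 ≤ r j := fun j => by rw [hr]; positivity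
  have hranti : ∀ {i j : ℕ}, i ≤ j → r j ≤ r i := by
    intro i j hij
    rw [hr, hr]
    apply mul_le_mul_of_nonneg_left _ hRnn
    apply Real.exp_le_exp.mpr
    have : (i:ℝ) ≤ j := by exact_mod_cast hij
    nlinarith
  have hswap :
      ∑ j ∈ Finset.range (k + 1),
        (∑ c ∈ Finset.univ.filter (fun c => r j ≤ ρ c), f c) * (r j - r (j + 1))
      = ∑ c : C, f c *
          ∑ j ∈ (Finset.range (k+1)).filter (fun j => r j ≤ ρ c), (r j - r (j+1)) := by
    simp only [Finset.sum_mul, Finset.sum_filter, Finset.mul_sum]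
    rw [Finset.sum_comm]
    congr 1
    ext c
    congr 1
    ext j
    split <;> simp
  rw [hswap, Finset.sum_filter]
  apply Finset.sum_le_sum
  intro c _
  rcases le_or_gt (r k) (ρ c) with h | h
  · rw [if_pos h]
    set S := (Finset.range (k+1)).filter (fun j => r j ≤ ρ c) with hSdef
    have hS : S.Nonempty := ⟨k, by simp [hSdef, h]⟩
    set j0 := S.min' hS with hj0
    have hj0mem : j0 ∈ S := S.min'_mem hS
    have hj0le : r j0 ≤ ρ c := (Finset.mem_filter.mp hj0mem).2
    have hsub : S ⊆ Finset.Ico j0 (k+1) := by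
      intro j hj
      rw [Finset.mem_Ico]
      exact ⟨S.min'_le j hj, Finset.mem_range.mp (Finset.mem_filter.mp hj).1⟩
    have hsum : ∑ j ∈ S, (r j - r (j+1)) ≤ ∑ j ∈ Finset.Ico j0 (k+1), (r j - r (j+1)) := by
      apply Finset.sum_le_sum_of_subset_of_nonneg hsub
      intro j _ _
      have := hranti (Nat.le_succ j)
      linarith
    have htel : ∑ j ∈ Finset.Ico j0 (k+1), (r j - r (j+1)) = r j0 - r (k+1) := by
      rw [Finset.sum_Ico_eq_sub _ (Finset.mem_range.mp (Finset.mem_filter.mp hj0mem).1).le,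
        Finset.sum_range_sub' r, Finset.sum_range_sub' r]
      ring
    have hbound : ∑ j ∈ S, (r j - r (j+1)) ≤ ρ c := by
      rw [htel] at hsum
      have := hrnn (k+1)
      linarith
    exact mul_le_mul_of_nonneg_left hbound (hf c)
  · rw [if_neg (not_le.mpr h)]
    have : (Finset.range (k+1)).filter (fun j => r j ≤ ρ c) = ∅ := by
      rw [Finset.filter_eq_empty_iff]
      intro j hj
      push_neg
      exact lt_of_lt_of_le h (hranti (Nat.lt_succ_iff.mp (Finset.mem_range.mp hj)))
    simp [this]
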